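/- For vectors e ∈ ℝⁿ, ŵ ∈ ℝⁿ and λ ≥ 0, with Ω = {ω ∈ ℝⁿ : Gω ≤ h} a nonempty polyhedron, sup_{ω∈Ω} { eᵀω − λ‖ω − ŵ‖ } = inf { (e − Gᵀη)ᵀŵ + ηᵀh : η ≥ 0, ‖e − Gᵀη‖ ≤ λ }, where the infimum over an empty feasible set is +∞ and the dual norm is used appropriately; in particular the left side equals inf_{‖z‖≤λ} { zᵀŵ + sup_{ω∈Ω} (e − z)ᵀω }. -/

import Mathlib

open scoped Matrix

/-- The Euclidean (ℓ²) norm on `Fin n → ℝ`; it is its own dual norm. -/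
noncomputable def l2norm {n : ℕ} (v : Fin n → ℝ) : ℝ :=
  Real.sqrt (dotProduct v v)

open scoped Pointwise

namespace SPND

variable {n : ℕ}

lemma dot_self_nonneg (v : Fin n → ℝ) : 0 ≤ dotProduct v v :=
  Finset.sum_nonneg fun i _ => mul_self_nonneg _

lemma l2norm_nonneg (v : Fin n → ℝ) : 0 ≤ l2norm v := Real.sqrt_nonneg _

lemma l2norm_zero : l2norm (0 : Fin n → ℝ) = 0 := by
  simp [l2norm]

lemma sq_l2norm (v : Fin n → ℝ) : l2norm v ^ 2 = dotProduct v v :=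
  Real.sq_sqrt (dot_self_nonneg v)

lemma dot_self_eq_sq (v : Fin n → ℝ) : dotProduct v v = ∑ i, v i ^ 2 := by
  simp [dotProduct, pow_two]

lemma cauchy (z v : Fin n → ℝ) : dotProduct z v ≤ l2norm z * l2norm v := by
  have h := Real.sum_mul_le_sqrt_mul_sqrt Finset.univ z v
  rw [l2norm, l2norm, dot_self_eq_sq, dot_self_eq_sq]
  exact h

lemma l2norm_smul (c : ℝ) (v : Fin n → ℝ) : l2norm (c • v) = |c| * l2norm v := by
  unfold l2norm
  have h : dotProduct (c • v) (c • v) = c ^ 2 * dotProduct v v := by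
    rw [smul_dotProduct, dotProduct_smul, smul_eq_mul, smul_eq_mul]; ring
  rw [h, Real.sqrt_mul (sq_nonneg c), Real.sqrt_sq_eq_abs]

lemma exists_dual {lam : ℝ} (hlam : 0 ≤ lam) (v : Fin n → ℝ) :
    ∃ z : Fin n → ℝ, l2norm z ≤ lam ∧ dotProduct z v = lam * l2norm v := by
  by_cases hv : l2norm v = 0
  · exact ⟨0, by simpa [l2norm_zero] using hlam, by simp [hv]⟩
  · have hvpos : 0 < l2norm v := lt_of_le_of_ne (l2norm_nonneg v) (Ne.symm hv)
    refine ⟨(lam / l2norm v) • v, le_of_eq ?_, ?_⟩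
    · rw [l2norm_smul, abs_of_nonneg (div_nonneg hlam hvpos.le), div_mul_cancel₀ _ hv]
    · rw [smul_dotProduct, smul_eq_mul, ← sq_l2norm v]
      field_simp

lemma l2norm_add_le (x y : Fin n → ℝ) : l2norm (x + y) ≤ l2norm x + l2norm y := by
  have hxy := cauchy x y
  have hexp : dotProduct (x + y) (x + y)
      = dotProduct x x + 2 * dotProduct x y + dotProduct y y := by
    rw [add_dotProduct, dotProduct_add, dotProduct_add,
      dotProduct_comm y x]; ring
  have h1 : dotProduct (x + y) (x + y) ≤ (l2norm x + l2norm y) ^ 2 := by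
    rw [hexp]
    nlinarith [sq_l2norm x, sq_l2norm y]
  calc l2norm (x + y) = Real.sqrt (dotProduct (x + y) (x + y)) := rfl
    _ ≤ Real.sqrt ((l2norm x + l2norm y) ^ 2) := Real.sqrt_le_sqrt h1
    _ = |l2norm x + l2norm y| := Real.sqrt_sq_eq_abs _
    _ = l2norm x + l2norm y := abs_of_nonneg (add_nonneg (l2norm_nonneg x) (l2norm_nonneg y))

lemma continuous_dot_right (v : Fin n → ℝ) :
    Continuous fun z : Fin n → ℝ => dotProduct z v :=
  continuous_finset_sum _ fun i _ => (continuous_apply i).mul continuous_const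

lemma continuous_l2norm : Continuous fun z : Fin n → ℝ => l2norm z := by
  have : Continuous fun z : Fin n → ℝ => dotProduct z z :=
    continuous_finset_sum _ fun i _ => (continuous_apply i).mul (continuous_apply i)
  exact this.sqrt

lemma abs_le_l2norm (z : Fin n → ℝ) (i : Fin n) : |z i| ≤ l2norm z := by
  have h1 : z i ^ 2 ≤ dotProduct z z := by
    rw [dot_self_eq_sq]
    exact Finset.single_le_sum (f := fun j => z j ^ 2) (fun j _ => sq_nonneg _)
      (Finset.mem_univ i)
  calc |z i| = Real.sqrt (z i ^ 2) := (Real.sqrt_sq_eq_abs _).symm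
    _ ≤ Real.sqrt (dotProduct z z) := Real.sqrt_le_sqrt h1
    _ = l2norm z := rfl

lemma isCompact_ball {lam : ℝ} (hlam : 0 ≤ lam) :
    IsCompact {z : Fin n → ℝ | l2norm z ≤ lam} := by
  have hclosed : IsClosed {z : Fin n → ℝ | l2norm z ≤ lam} :=
    isClosed_le continuous_l2norm continuous_const
  have hsub : {z : Fin n → ℝ | l2norm z ≤ lam} ⊆ Metric.closedBall 0 lam := by
    intro z hz
    rw [Metric.mem_closedBall, dist_zero_right]
    rw [pi_norm_le_iff_of_nonneg hlam]
    intro i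
    exact (abs_le_l2norm z i).trans hz
  exact (isCompact_closedBall 0 lam).of_isClosed_subset hclosed hsub

lemma zero_mem_ball {lam : ℝ} (hlam : 0 ≤ lam) : (0 : Fin n → ℝ) ∈ {z : Fin n → ℝ | l2norm z ≤ lam} := by
  simpa [l2norm_zero] using hlam

lemma dot_sum {κ : Type*} (s : Finset κ) (v : Fin n → ℝ) (f : κ → Fin n → ℝ) :
    dotProduct v (∑ k ∈ s, f k) = ∑ k ∈ s, dotProduct v (f k) := by
  classical
  induction s using Finset.induction with
  | empty => simp
  | insert _ _ hk ih => rename_i a s'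
                        rw [Finset.sum_insert hk, Finset.sum_insert hk, dotProduct_add, ih]


variable {E : Type*} [NormedAddCommGroup E] [NormedSpace ℝ E] [FiniteDimensional ℝ E]
variable {ι : Type*} [Fintype ι]

lemma carath (v : ι → E) (N : ℕ) : ∀ T : Finset ι, T.card ≤ N →
    ∀ η : ι → ℝ, (∀ i, 0 ≤ η i) → (∀ i ∉ T, η i = 0) →
    ∃ (S : Finset ι) (μ : ι → ℝ), LinearIndependent ℝ (fun i : S => v i) ∧
      (∀ i, 0 ≤ μ i) ∧ (∀ i ∉ S, μ i = 0) ∧ ∑ i, μ i • v i = ∑ i, η i • v i := by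
  classical
  induction N with
  | zero =>
    intro T hT η hη hsupp
    have hTe : T = ∅ := Finset.card_eq_zero.mp (Nat.le_zero.mp hT)
    subst hTe
    exact ⟨∅, η, linearIndependent_empty_type, hη, hsupp, rfl⟩
  | succ N ih =>
    intro T hT η hη hsupp
    by_cases hLI : LinearIndependent ℝ (fun i : T => v i)
    · exact ⟨T, η, hLI, hη, hsupp, rfl⟩
    have key : ∀ c : ι → ℝ, (∀ i ∉ T, c i = 0) → (∑ i, c i • v i = 0) →
        (∃ i ∈ T, 0 < c i) →
        ∃ (S : Finset ι) (μ : ι → ℝ), LinearIndependent ℝ (fun i : S => v i) ∧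
          (∀ i, 0 ≤ μ i) ∧ (∀ i ∉ S, μ i = 0) ∧ ∑ i, μ i • v i = ∑ i, η i • v i := by
      rintro c hcsupp hcsum ⟨i₂, hi₂T, hi₂pos⟩
      set I : Finset ι := T.filter (fun i => 0 < c i) with hI
      have hIne : I.Nonempty := ⟨i₂, Finset.mem_filter.mpr ⟨hi₂T, hi₂pos⟩⟩
      obtain ⟨i₀, hi₀I, hmin⟩ := Finset.exists_min_image I (fun i => η i / c i) hIne
      obtain ⟨hi₀T, hci₀⟩ := Finset.mem_filter.mp hi₀I
      set t := η i₀ / c i₀ with ht_def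
      have ht : 0 ≤ t := div_nonneg (hη i₀) hci₀.le
      set μ : ι → ℝ := fun i => η i - t * c i with hμ_def
      have hμ0 : ∀ i, 0 ≤ μ i := by
        intro i
        by_cases hpos : 0 < c i
        · by_cases hiT : i ∈ T
          · have h1 : t ≤ η i / c i := hmin i (Finset.mem_filter.mpr ⟨hiT, hpos⟩)
            have h2 : t * c i ≤ η i := by
              rw [le_div_iff₀ hpos] at h1; linarith
            simp only [hμ_def]; linarith
          · exact absurd (hcsupp i hiT) (ne_of_gt hpos)
        · have h2 : t * c i ≤ 0 := mul_nonpos_of_nonneg_of_nonpos ht (not_lt.mp hpos)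
          have := hη i
          simp only [hμ_def]; linarith
      have hμi₀ : μ i₀ = 0 := by
        simp only [hμ_def, ht_def]
        field_simp
        ring
      have hμsupp : ∀ i ∉ T.erase i₀, μ i = 0 := by
        intro i hi
        by_cases hii : i = i₀
        · rw [hii]; exact hμi₀
        · have hiT : i ∉ T := fun hmem => hi (Finset.mem_erase.mpr ⟨hii, hmem⟩)
          simp only [hμ_def, hsupp i hiT, hcsupp i hiT]; ring
      have hμsum : ∑ i, μ i • v i = ∑ i, η i • v i := by
        simp only [hμ_def, sub_smul, Finset.sum_sub_distrib, mul_smul]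
        rw [← Finset.smul_sum, hcsum, smul_zero, sub_zero]
      have hcard : (T.erase i₀).card ≤ N := by
        have h1 := Finset.card_erase_of_mem hi₀T
        omega
      obtain ⟨S, ν, hSLI, hν0, hνsupp, hνsum⟩ := ih (T.erase i₀) hcard μ hμ0 hμsupp
      exact ⟨S, ν, hSLI, hν0, hνsupp, hνsum.trans hμsum⟩
    obtain ⟨g, hg0, i₁, hi₁⟩ := Fintype.not_linearIndependent_iff.mp hLI
    set c : ι → ℝ := fun i => if h : i ∈ T then g ⟨i, h⟩ else 0 with hc
    have hcsupp : ∀ i ∉ T, c i = 0 := fun i hi => dif_neg hi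
    have hcT : ∀ i : T, c ↑i = g i := by
      intro i
      simp only [hc, dif_pos i.2]
    have hcsum : ∑ i, c i • v i = 0 := by
      rw [← Finset.sum_subset (Finset.subset_univ T)
        (fun i _ hi => by rw [hcsupp i hi, zero_smul])]
      calc ∑ i ∈ T, c i • v i = ∑ i : T, c ↑i • v ↑i := (Finset.sum_coe_sort T _).symm
        _ = ∑ i : T, g i • v ↑i := Finset.sum_congr rfl fun i _ => by rw [hcT i]
        _ = 0 := hg0
    have hcne : c ↑i₁ ≠ 0 := by rw [hcT i₁]; exact hi₁
    rcases lt_or_gt_of_ne hcne with hneg | hpos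
    · refine key (-c) (fun i hi => by simp [hcsupp i hi]) ?_ ⟨↑i₁, i₁.2, by simpa using hneg⟩
      simp only [Pi.neg_apply, neg_smul, Finset.sum_neg_distrib, hcsum, neg_zero]
    · exact key c hcsupp hcsum ⟨↑i₁, i₁.2, hpos⟩

lemma isClosed_orthant {κ : Type*} [Fintype κ] : IsClosed {μ : κ → ℝ | ∀ i, 0 ≤ μ i} := by
  have : {μ : κ → ℝ | ∀ i, 0 ≤ μ i} = ⋂ i, {μ : κ → ℝ | 0 ≤ μ i} := by
    ext μ; simp
  rw [this]
  exact isClosed_iInter fun i => isClosed_le continuous_const (continuous_apply i)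

lemma isClosed_cone (v : ι → E) :
    IsClosed {x : E | ∃ η : ι → ℝ, (∀ i, 0 ≤ η i) ∧ ∑ i, η i • v i = x} := by
  classical
  have hrw : {x : E | ∃ η : ι → ℝ, (∀ i, 0 ≤ η i) ∧ ∑ i, η i • v i = x}
      = ⋃ S : {S : Finset ι // LinearIndependent ℝ (fun i : S => v i)},
        {x : E | ∃ η : ι → ℝ, (∀ i, 0 ≤ η i) ∧ (∀ i ∉ S.1, η i = 0) ∧ ∑ i, η i • v i = x} := by
    ext x
    constructor
    · rintro ⟨η, hη, rfl⟩
      obtain ⟨S, μ, hLI, hμ0, hμsupp, hμsum⟩ :=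
        carath v (Finset.univ.card) Finset.univ (le_refl _) η hη (by simp)
      exact Set.mem_iUnion.mpr ⟨⟨S, hLI⟩, μ, hμ0, hμsupp, hμsum⟩
    · intro hx
      obtain ⟨S, η, hη, _, hsum⟩ := Set.mem_iUnion.mp hx
      exact ⟨η, hη, hsum⟩
  rw [hrw]
  refine isClosed_iUnion_of_finite fun S => ?_
  let L : (S.1 → ℝ) →ₗ[ℝ] E :=
    { toFun := fun μ => ∑ i, μ i • v ↑i
      map_add' := fun μ₁ μ₂ => by simp [add_smul, Finset.sum_add_distrib]
      map_smul' := fun c μ => by simp [mul_smul, Finset.smul_sum] }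
  have hker : LinearMap.ker L = ⊥ := by
    rw [LinearMap.ker_eq_bot']
    intro μ hμ
    exact funext fun i => Fintype.linearIndependent_iff.mp S.2 μ hμ i
  have hce := LinearMap.isClosedEmbedding_of_injective hker
  have himg : {x : E | ∃ η : ι → ℝ, (∀ i, 0 ≤ η i) ∧ (∀ i ∉ S.1, η i = 0) ∧ ∑ i, η i • v i = x}
      = L '' {μ | ∀ i, 0 ≤ μ i} := by
    ext x
    constructor
    · rintro ⟨η, hη, hsupp, rfl⟩
      refine ⟨fun i => η ↑i, fun i => hη ↑i, ?_⟩
      show ∑ i : S.1, η ↑i • v ↑i = ∑ i, η i • v i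
      rw [Finset.sum_coe_sort S.1 (fun i => η i • v i)]
      exact Finset.sum_subset (Finset.subset_univ _)
        (fun i _ hi => by rw [hsupp i hi, zero_smul])
    · rintro ⟨μ, hμ, rfl⟩
      refine ⟨fun i => if h : i ∈ S.1 then μ ⟨i, h⟩ else 0, ?_, fun i hi => dif_neg hi, ?_⟩
      · intro i
        by_cases h : i ∈ S.1
        · simpa only [dif_pos h] using hμ ⟨i, h⟩
        · simp only [dif_neg h]; exact le_refl 0
      · show ∑ i, (if h : i ∈ S.1 then μ ⟨i, h⟩ else 0) • v i = ∑ i : S.1, μ i • v ↑i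
        rw [← Finset.sum_subset (Finset.subset_univ S.1)
          (fun i _ hi => by rw [dif_neg hi, zero_smul])]
        rw [← Finset.sum_coe_sort S.1 (fun i => (if h : i ∈ S.1 then μ ⟨i, h⟩ else 0) • v i)]
        exact Finset.sum_congr rfl fun i _ => by rw [dif_pos i.2]
  rw [himg]
  exact hce.isClosedMap _ isClosed_orthant

lemma convex_cone (v : ι → E) :
    Convex ℝ {x : E | ∃ η : ι → ℝ, (∀ i, 0 ≤ η i) ∧ ∑ i, η i • v i = x} := by
  rintro x ⟨η₁, hη₁, rfl⟩ y ⟨η₂, hη₂, rfl⟩ a b ha hb hab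
  refine ⟨fun i => a * η₁ i + b * η₂ i,
    fun i => add_nonneg (mul_nonneg ha (hη₁ i)) (mul_nonneg hb (hη₂ i)), ?_⟩
  simp only [add_smul, mul_smul, Finset.sum_add_distrib, Finset.smul_sum]

lemma smul_mem_cone (v : ι → E) {x : E} {t : ℝ} (ht : 0 ≤ t)
    (hx : x ∈ {x : E | ∃ η : ι → ℝ, (∀ i, 0 ≤ η i) ∧ ∑ i, η i • v i = x}) :
    t • x ∈ {x : E | ∃ η : ι → ℝ, (∀ i, 0 ≤ η i) ∧ ∑ i, η i • v i = x} := by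
  obtain ⟨η, hη, rfl⟩ := hx
  exact ⟨fun i => t * η i, fun i => mul_nonneg ht (hη i),
    by simp only [mul_smul, ← Finset.smul_sum]⟩

lemma gen_mem_cone (v : ι → E) (k : ι) :
    v k ∈ {x : E | ∃ η : ι → ℝ, (∀ i, 0 ≤ η i) ∧ ∑ i, η i • v i = x} := by
  classical
  refine ⟨fun i => if i = k then 1 else 0, fun i => by dsimp only; split <;> norm_num, ?_⟩
  simp [ite_smul]

lemma zero_mem_cone (v : ι → E) :
    (0 : E) ∈ {x : E | ∃ η : ι → ℝ, (∀ i, 0 ≤ η i) ∧ ∑ i, η i • v i = x} :=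
  ⟨0, fun _ => le_refl 0, by simp⟩


lemma lp_duality {n m : ℕ} (G : Matrix (Fin m) (Fin n) ℝ) (h : Fin m → ℝ)
    (hne : {ω : Fin n → ℝ | ∀ i, G.mulVec ω i ≤ h i}.Nonempty) (c : Fin n → ℝ) :
    (⨆ ω ∈ {ω : Fin n → ℝ | ∀ i, G.mulVec ω i ≤ h i}, ((dotProduct c ω : ℝ) : EReal))
      = ⨅ η ∈ {η : Fin m → ℝ | (∀ i, 0 ≤ η i) ∧ G.transpose.mulVec η = c},
          ((dotProduct η h : ℝ) : EReal) := by
  classical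
  set Ω := {ω : Fin n → ℝ | ∀ i, G.mulVec ω i ≤ h i} with hΩ
  have weak : ∀ ω ∈ Ω, ∀ η : Fin m → ℝ, (∀ i, 0 ≤ η i) → G.transpose.mulVec η = c →
      dotProduct c ω ≤ dotProduct η h := by
    intro ω hω η hη0 hηc
    have h1 : dotProduct c ω = dotProduct η (G.mulVec ω) := by
      rw [← hηc, Matrix.mulVec_transpose, ← Matrix.dotProduct_mulVec]
    rw [h1]
    exact Finset.sum_le_sum fun i _ => mul_le_mul_of_nonneg_left (hω i) (hη0 i)
  apply le_antisymm
  · exact iSup₂_le fun ω hω => le_iInf₂ fun η hη =>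
      EReal.coe_le_coe_iff.mpr (weak ω hω η hη.1 hη.2)
  · set P := (⨆ ω ∈ Ω, ((dotProduct c ω : ℝ) : EReal)) with hP
    by_cases hPtop : P = ⊤
    · rw [hPtop]; exact le_top
    obtain ⟨ωf, hωf⟩ := hne
    have hPbot : P ≠ ⊥ := by
      have h1 : ((dotProduct c ωf : ℝ) : EReal) ≤ P :=
        le_iSup₂ (f := fun ω (_ : ω ∈ Ω) => ((dotProduct c ω : ℝ) : EReal)) ωf hωf
      intro hb
      rw [hb, le_bot_iff] at h1
      exact (EReal.coe_ne_bot _) h1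
    obtain ⟨T, hT⟩ : ∃ T : ℝ, P = (T : EReal) := ⟨P.toReal, (EReal.coe_toReal hPtop hPbot).symm⟩
    have hub : ∀ ω ∈ Ω, dotProduct c ω ≤ T := fun ω hω =>
      EReal.coe_le_coe_iff.mp (hT ▸
        le_iSup₂ (f := fun ω (_ : ω ∈ Ω) => ((dotProduct c ω : ℝ) : EReal)) ω hω)
    set v' : (Fin m ⊕ Unit) → (Fin n → ℝ) × ℝ :=
      Sum.elim (fun i => ((fun j => G i j), h i)) (fun _ => (0, 1)) with hv'
    set K := {x : (Fin n → ℝ) × ℝ |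
      ∃ θ : (Fin m ⊕ Unit) → ℝ, (∀ k, 0 ≤ θ k) ∧ ∑ k, θ k • v' k = x} with hKdef
    suffices hmemK : ((c, T) : (Fin n → ℝ) × ℝ) ∈ K by
      obtain ⟨θ, hθ0, hθsum⟩ := hmemK
      set η := fun i => θ (Sum.inl i) with hη
      have hfst : (∑ i : Fin m, η i • (fun j => G i j)) = c := by
        have h1 := congrArg Prod.fst hθsum
        rw [Prod.fst_sum] at h1
        simp only [Prod.smul_fst] at h1
        rw [Fintype.sum_sum_type] at h1
        simpa [hv', hη] using h1
      have hsnd : (∑ i : Fin m, η i * h i) + θ (Sum.inr ()) = T := by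
        have h1 := congrArg Prod.snd hθsum
        rw [Prod.snd_sum] at h1
        simp only [Prod.smul_snd] at h1
        rw [Fintype.sum_sum_type] at h1
        simpa [hv', hη, smul_eq_mul] using h1
      have hGη : G.transpose.mulVec η = c := by
        funext j
        have h2 := congrFun hfst j
        simp only [Finset.sum_apply, Pi.smul_apply, smul_eq_mul] at h2
        rw [← h2]
        simp only [Matrix.mulVec, dotProduct, Matrix.transpose_apply]
        exact Finset.sum_congr rfl fun i _ => mul_comm _ _
      have hηh : dotProduct η h ≤ T := by
        have h3 := hθ0 (Sum.inr ())
        have h4 : dotProduct η h = ∑ i : Fin m, η i * h i := rfl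
        linarith
      have hmemη : η ∈ {η : Fin m → ℝ | (∀ i, 0 ≤ η i) ∧ G.transpose.mulVec η = c} :=
        ⟨fun i => hθ0 (Sum.inl i), hGη⟩
      calc (⨅ η ∈ {η : Fin m → ℝ | (∀ i, 0 ≤ η i) ∧ G.transpose.mulVec η = c},
              ((dotProduct η h : ℝ) : EReal))
          ≤ ((dotProduct η h : ℝ) : EReal) := iInf₂_le η hmemη
        _ ≤ (T : EReal) := EReal.coe_le_coe_iff.mpr hηh
        _ = P := hT.symm
    by_contra hKn
    obtain ⟨f, u, hfu, hu⟩ := geometric_hahn_banach_closed_point (convex_cone v')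
      (isClosed_cone v') hKn
    have hu0 : 0 < u := by
      have h1 := hfu 0 (zero_mem_cone v')
      simpa using h1
    have hfle : ∀ x ∈ K, f x ≤ 0 := by
      intro x hx
      by_contra hpos
      push_neg at hpos
      have h2 := hfu (((u + 1) / f x) • x)
        (smul_mem_cone v' (by positivity) hx)
      rw [map_smul, smul_eq_mul, div_mul_cancel₀ _ (ne_of_gt hpos)] at h2
      linarith
    have hs : f ((0 : Fin n → ℝ), (1 : ℝ)) ≤ 0 := hfle _ (gen_mem_cone v' (Sum.inr ()))
    set s := f ((0 : Fin n → ℝ), (1 : ℝ)) with hsdef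
    set y : Fin n → ℝ := fun j => f ((Pi.single j 1 : Fin n → ℝ), (0 : ℝ)) with hydef
    have hrep : ∀ (x : Fin n → ℝ) (r : ℝ), f (x, r) = dotProduct x y + r * s := by
      intro x r
      have hxx : ∑ j, x j • (Pi.single j 1 : Fin n → ℝ) = x := by
        funext k
        simp [Finset.sum_apply, Pi.single_apply, mul_ite]
      have hx : ((x, r) : (Fin n → ℝ) × ℝ)
          = (∑ j, x j • ((Pi.single j 1 : Fin n → ℝ), (0 : ℝ))) + ((0 : Fin n → ℝ), r) := by
        refine Prod.ext_iff.mpr ⟨?_, ?_⟩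
        · rw [Prod.fst_add, Prod.fst_sum]
          simp only [Prod.smul_fst]
          simp [hxx]
        · rw [Prod.snd_add, Prod.snd_sum]
          simp only [Prod.smul_snd]
          simp
      rw [hx, map_add, map_sum]
      have h0r : f ((0 : Fin n → ℝ), r) = r * s := by
        have h5 : ((0 : Fin n → ℝ), r) = r • ((0 : Fin n → ℝ), (1 : ℝ)) := by
          refine Prod.ext_iff.mpr ⟨by simp, by simp⟩
        rw [h5, map_smul, smul_eq_mul]
      rw [h0r]
      congr 1
      exact Finset.sum_congr rfl fun j _ => by rw [map_smul, smul_eq_mul]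
    have hrow : ∀ i, dotProduct (fun j => G i j) y + h i * s ≤ 0 := by
      intro i
      have h1 := hfle _ (gen_mem_cone v' (Sum.inl i))
      rw [show v' (Sum.inl i) = ((fun j => G i j), h i) from rfl, hrep] at h1
      exact h1
    have hcT : 0 < dotProduct c y + T * s := by
      have h1 := hu
      rw [hrep] at h1
      linarith
    rcases lt_or_eq_of_le hs with hsneg | hs0
    · -- s < 0
      have hspos : 0 < -s := by linarith
      set ω := (-s)⁻¹ • y with hωdef
      have hωΩ : ω ∈ Ω := by
        intro i
        have h1 : dotProduct (fun j => G i j) y ≤ h i * (-s) := by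
          have := hrow i; nlinarith
        have h2 : G.mulVec ω i = (-s)⁻¹ * dotProduct (fun j => G i j) y := by
          rw [hωdef, Matrix.mulVec_smul]
          rfl
        rw [h2]
        calc (-s)⁻¹ * dotProduct (fun j => G i j) y
            ≤ (-s)⁻¹ * (h i * (-s)) := mul_le_mul_of_nonneg_left h1 (inv_nonneg.mpr hspos.le)
          _ = h i := by field_simp [ne_of_lt hsneg]
      have h3 := hub ω hωΩ
      have h4 : dotProduct c ω = (-s)⁻¹ * dotProduct c y := by
        rw [hωdef, dotProduct_smul, smul_eq_mul]
      have h5 : T * (-s) < dotProduct c y := by nlinarith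
      have h6 : (-s)⁻¹ * (T * (-s)) < (-s)⁻¹ * dotProduct c y :=
        mul_lt_mul_of_pos_left h5 (inv_pos.mpr hspos)
      have h7 : (-s)⁻¹ * (T * (-s)) = T := by field_simp [ne_of_lt hsneg]
      rw [h4] at h3
      linarith
    · -- s = 0
      have hs0' : s = 0 := hs0
      have hGy : ∀ i, dotProduct (fun j => G i j) y ≤ 0 := by
        intro i
        have := hrow i
        rw [hs0'] at this
        linarith
      have hcd : 0 < dotProduct c y := by
        have := hcT
        rw [hs0'] at this
        linarith
      set t0 := (T + 1 - dotProduct c ωf) / dotProduct c y with ht0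
      set t1 := max t0 0 with ht1def
      have ht1 : 0 ≤ t1 := le_max_right _ _
      set ω₂ := ωf + t1 • y with hω₂def
      have hω₂ : ω₂ ∈ Ω := by
        intro i
        have h1 : G.mulVec ω₂ i
            = G.mulVec ωf i + t1 * dotProduct (fun j => G i j) y := by
          rw [hω₂def, Matrix.mulVec_add, Matrix.mulVec_smul]
          rfl
        rw [h1]
        have h2 : t1 * dotProduct (fun j => G i j) y ≤ 0 :=
          mul_nonpos_of_nonneg_of_nonpos ht1 (hGy i)
        have := hωf i
        linarith
      have h3 := hub ω₂ hω₂
      have h4 : dotProduct c ω₂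
          = dotProduct c ωf + t1 * dotProduct c y := by
        rw [hω₂def, dotProduct_add, dotProduct_smul, smul_eq_mul]
      have h5 : t0 * dotProduct c y = T + 1 - dotProduct c ωf := by
        rw [ht0]
        field_simp
      have h6 : t0 ≤ t1 := le_max_left _ _
      nlinarith [mul_le_mul_of_nonneg_right h6 hcd.le]


lemma exists_min_z {n m : ℕ} (G : Matrix (Fin m) (Fin n) ℝ) (h : Fin m → ℝ)
    (e w : Fin n → ℝ) {lam S : ℝ} (hlam : 0 ≤ lam)
    (hub : ∀ ω ∈ {ω : Fin n → ℝ | ∀ i, G.mulVec ω i ≤ h i},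
      dotProduct e ω - lam * l2norm (ω - w) ≤ S) :
    ∃ z : Fin n → ℝ, l2norm z ≤ lam ∧
      ∀ ω ∈ {ω : Fin n → ℝ | ∀ i, G.mulVec ω i ≤ h i},
        dotProduct e ω - dotProduct z (ω - w) ≤ S := by
  classical
  set Ω := {ω : Fin n → ℝ | ∀ i, G.mulVec ω i ≤ h i} with hΩ
  set Bs := {z : Fin n → ℝ | l2norm z ≤ lam} with hBs
  have hBc : IsCompact Bs := isCompact_ball hlam
  set Z : {ω : Fin n → ℝ // ω ∈ Ω} → Set (Fin n → ℝ) := fun ω =>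
    {z | dotProduct e ω.1 - S ≤ dotProduct z (ω.1 - w)} with hZ
  have hZc : ∀ ω, IsClosed (Z ω) := fun ω =>
    isClosed_le continuous_const (continuous_dot_right _)
  have hfin : ∀ t : Finset {ω : Fin n → ℝ // ω ∈ Ω}, (Bs ∩ ⋂ ω ∈ t, Z ω).Nonempty := by
    intro t
    rcases t.eq_empty_or_nonempty with rfl | htne
    · exact ⟨0, zero_mem_ball hlam, by simp⟩
    by_contra hem
    have hA : ∀ z ∈ Bs, ∃ ω ∈ t, z ∉ Z ω := by
      intro z hz
      by_contra hcon
      push_neg at hcon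
      exact hem ⟨z, hz, Set.mem_iInter₂.mpr hcon⟩
    set a : {ω // ω ∈ t} → (Fin n → ℝ) → ℝ := fun i z =>
      dotProduct e i.1.1 - S - dotProduct z (i.1.1 - w) with ha
    set U : Set ({ω // ω ∈ t} → ℝ) := {u : {ω // ω ∈ t} → ℝ | ∃ z ∈ Bs, ∀ i, a i z ≤ u i} with hU
    set A : Set ({ω // ω ∈ t} → ℝ) := (fun z => fun i => a i z) '' Bs with hA2
    set Q : Set ({ω // ω ∈ t} → ℝ) := {u : {ω // ω ∈ t} → ℝ | ∀ i, 0 ≤ u i} with hQ2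
    have hUeq : U = A + Q := by
      ext u
      constructor
      · rintro ⟨z, hz, hzu⟩
        exact ⟨fun i => a i z, ⟨z, hz, rfl⟩, fun i => u i - a i z,
          fun i => sub_nonneg.mpr (hzu i), by funext i; simp⟩
      · rintro ⟨x, ⟨z, hz, rfl⟩, qq, hqq, rfl⟩
        exact ⟨z, hz, fun i => le_add_of_nonneg_right (hqq i)⟩
    have hUclosed : IsClosed U := by
      rw [hUeq]
      have horth : IsClosed Q := by
        have hQ3 : Q = ⋂ i, {u : {ω // ω ∈ t} → ℝ | 0 ≤ u i} := by ext; simp [hQ2]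
        rw [hQ3]
        exact isClosed_iInter fun i => isClosed_le continuous_const (continuous_apply i)
      have hAc : IsCompact A := hBc.image
        (continuous_pi fun i => continuous_const.sub (continuous_dot_right _))
      exact horth.add_left_of_isCompact hAc
    have hUconv : Convex ℝ U := by
      rintro u₁ ⟨z₁, hz₁, hu₁⟩ u₂ ⟨z₂, hz₂, hu₂⟩ p q hp hq hpq
      refine ⟨p • z₁ + q • z₂, ?_, ?_⟩
      · show l2norm (p • z₁ + q • z₂) ≤ lam
        calc l2norm (p • z₁ + q • z₂) ≤ l2norm (p • z₁) + l2norm (q • z₂) := l2norm_add_le _ _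
          _ = p * l2norm z₁ + q * l2norm z₂ := by
              rw [l2norm_smul, l2norm_smul, abs_of_nonneg hp, abs_of_nonneg hq]
          _ ≤ p * lam + q * lam := add_le_add
              (mul_le_mul_of_nonneg_left hz₁ hp) (mul_le_mul_of_nonneg_left hz₂ hq)
          _ = lam := by rw [← add_mul, hpq, one_mul]
      · intro i
        have haff : a i (p • z₁ + q • z₂) = p * a i z₁ + q * a i z₂ := by
          have hd1 : dotProduct (p • z₁ + q • z₂) (i.1.1 - w)
              = p * dotProduct z₁ (i.1.1 - w) + q * dotProduct z₂ (i.1.1 - w) := by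
            rw [add_dotProduct, smul_dotProduct, smul_dotProduct,
              smul_eq_mul, smul_eq_mul]
          simp only [ha]
          rw [hd1]
          linear_combination (S - dotProduct e i.1.1) * hpq
        rw [haff]
        have g1 := mul_le_mul_of_nonneg_left (hu₁ i) hp
        have g2 := mul_le_mul_of_nonneg_left (hu₂ i) hq
        simp only [Pi.add_apply, Pi.smul_apply, smul_eq_mul]
        linarith
    have hU0 : (0 : {ω // ω ∈ t} → ℝ) ∉ U := by
      rintro ⟨z, hz, hz0⟩
      obtain ⟨ω, hωt, hωz⟩ := hA z hz
      have h1 := hz0 ⟨ω, hωt⟩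
      simp only [ha, Pi.zero_apply] at h1
      refine hωz ?_
      simp only [hZ, Set.mem_setOf_eq]
      linarith
    obtain ⟨f, u0, hfu, hu0⟩ := geometric_hahn_banach_closed_point hUconv hUclosed hU0
    have hu0neg : u0 < 0 := by simpa using hu0
    set q : {ω // ω ∈ t} → ℝ := fun i => -(f (Pi.single i 1)) with hqdef
    have hmemU : ∀ z ∈ Bs, (fun i => a i z) ∈ U := fun z hz => ⟨z, hz, fun i => le_refl _⟩
    have hbase : (fun i => a i 0) ∈ U := hmemU 0 (zero_mem_ball hlam)
    have hq0 : ∀ i, 0 ≤ q i := by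
      intro i
      by_contra hneg
      push_neg at hneg
      have hd : 0 < f (Pi.single i 1) := by
        simp only [hqdef] at hneg; linarith
      set sing : {ω // ω ∈ t} → ℝ := Pi.single i 1 with hsing
      set ub := f (fun i => a i 0) with hubdef
      obtain ⟨tt, htt0, h4⟩ : ∃ tt : ℝ, 0 ≤ tt ∧ (u0 - ub) / f sing < tt := by
        refine ⟨max 0 ((u0 - ub) / f sing) + 1, ?_, ?_⟩
        · have := le_max_left (0:ℝ) ((u0 - ub) / f sing); linarith
        · have := le_max_right (0:ℝ) ((u0 - ub) / f sing); linarith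
      have hmem2 : ((fun j => a j 0) + tt • sing) ∈ U := by
        refine ⟨0, zero_mem_ball hlam, fun j => ?_⟩
        have h9 : (0:ℝ) ≤ sing j := by
          rcases eq_or_ne j i with rfl | hji
          · simp [hsing]
          · simp [hsing, Pi.single_apply, hji]
        have h8 : 0 ≤ (tt • sing) j := by
          simp only [Pi.smul_apply, smul_eq_mul]
          exact mul_nonneg htt0 h9
        simp only [Pi.add_apply]
        linarith
      have h2 := hfu _ hmem2
      rw [map_add, map_smul, smul_eq_mul] at h2
      have h5 : u0 - ub < tt * f sing := (div_lt_iff₀ hd).mp h4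
      rw [← hubdef] at h2
      linarith
    have hrepf : ∀ uu : {ω // ω ∈ t} → ℝ, f uu = - ∑ i, q i * uu i := by
      intro uu
      have hdecomp : uu = ∑ i, uu i • (Pi.single i (1:ℝ) : {ω // ω ∈ t} → ℝ) := by
        funext k
        rw [Finset.sum_apply]
        rw [show ∑ i, (uu i • (Pi.single i (1:ℝ) : {ω // ω ∈ t} → ℝ)) k
            = ∑ i, uu i * (Pi.single i (1:ℝ) : {ω // ω ∈ t} → ℝ) k from rfl]
        simp [Pi.single_apply, mul_ite]
      conv_lhs => rw [hdecomp]
      rw [map_sum]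
      have hterm : ∀ i : {ω // ω ∈ t},
          f (uu i • (Pi.single i (1:ℝ) : {ω // ω ∈ t} → ℝ)) = -(q i * uu i) := by
        intro i
        rw [map_smul, smul_eq_mul]
        simp only [hqdef]
        ring
      rw [Finset.sum_congr rfl fun i _ => hterm i, Finset.sum_neg_distrib]
    have hposcomb : ∀ z ∈ Bs, 0 < ∑ i, q i * a i z := by
      intro z hz
      have h1 := hfu _ (hmemU z hz)
      rw [hrepf] at h1
      linarith
    have hσpos : 0 < ∑ i, q i := by
      rcases (Finset.sum_nonneg fun i _ => hq0 i).lt_or_eq with hlt | heq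
      · exact hlt
      · exfalso
        have hq00 : ∀ i, q i = 0 := fun i =>
          (Finset.sum_eq_zero_iff_of_nonneg fun j _ => hq0 j).mp heq.symm i (Finset.mem_univ i)
        have := hposcomb 0 (zero_mem_ball hlam)
        simp [hq00] at this
    set σ := ∑ i, q i with hσ
    set p : {ω // ω ∈ t} → ℝ := fun i => q i / σ with hpdef
    have hp0 : ∀ i, 0 ≤ p i := fun i => div_nonneg (hq0 i) hσpos.le
    have hpsum : ∑ i, p i = 1 := by
      simp only [hpdef]
      rw [← Finset.sum_div, div_self (ne_of_gt hσpos)]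
    set ωb := ∑ i : {ω // ω ∈ t}, p i • (i.1.1 : Fin n → ℝ) with hωb
    have hωbΩ : ωb ∈ Ω := by
      intro j
      have h1 : G.mulVec ωb = ∑ i : {ω // ω ∈ t}, p i • G.mulVec i.1.1 := by
        rw [hωb, show G.mulVec (∑ i : {ω // ω ∈ t}, p i • (i.1.1 : Fin n → ℝ))
            = G.mulVecLin (∑ i : {ω // ω ∈ t}, p i • (i.1.1 : Fin n → ℝ))
          from (Matrix.mulVecLin_apply _ _).symm, map_sum]
        exact Finset.sum_congr rfl fun i _ => by
          rw [map_smul, Matrix.mulVecLin_apply]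
      have h2 : G.mulVec ωb j = ∑ i : {ω // ω ∈ t}, p i * G.mulVec i.1.1 j := by
        rw [h1, Finset.sum_apply]
        rfl
      rw [h2]
      calc ∑ i : {ω // ω ∈ t}, p i * G.mulVec i.1.1 j
          ≤ ∑ i : {ω // ω ∈ t}, p i * h j :=
            Finset.sum_le_sum fun i _ => mul_le_mul_of_nonneg_left (i.1.2 j) (hp0 i)
        _ = h j := by rw [← Finset.sum_mul, hpsum, one_mul]
    have hcomb : ∀ z : Fin n → ℝ, ∑ i, p i * a i z
        = dotProduct e ωb - S - dotProduct z (ωb - w) := by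
      intro z
      have he : dotProduct e ωb = ∑ i, p i * dotProduct e i.1.1 := by
        rw [hωb, dot_sum]
        exact Finset.sum_congr rfl fun i _ => by rw [dotProduct_smul, smul_eq_mul]
      have hz : dotProduct z ωb = ∑ i, p i * dotProduct z i.1.1 := by
        rw [hωb, dot_sum]
        exact Finset.sum_congr rfl fun i _ => by rw [dotProduct_smul, smul_eq_mul]
      have hzw : dotProduct z (ωb - w)
          = dotProduct z ωb - dotProduct z w := dotProduct_sub _ _ _
      have hsum1 : ∑ i : {ω // ω ∈ t}, p i * S = S := by rw [← Finset.sum_mul, hpsum, one_mul]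
      have hsum2 : ∑ i : {ω // ω ∈ t}, p i * dotProduct z w = dotProduct z w := by
        rw [← Finset.sum_mul, hpsum, one_mul]
      have hexp : ∀ i : {ω // ω ∈ t}, p i * a i z
          = p i * dotProduct e i.1.1 - p i * S
            - (p i * dotProduct z i.1.1 - p i * dotProduct z w) := by
        intro i
        simp only [ha]
        rw [dotProduct_sub]
        ring
      rw [Finset.sum_congr rfl fun i _ => hexp i, Finset.sum_sub_distrib,
        Finset.sum_sub_distrib, Finset.sum_sub_distrib, ← he, ← hz, hsum1, hsum2, hzw]
    obtain ⟨zs, hzsB, hzs⟩ := exists_dual hlam (ωb - w)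
    have hf1 : ∑ i, p i * a i zs ≤ 0 := by
      rw [hcomb, hzs]
      have := hub ωb hωbΩ
      linarith
    have hf2 : 0 < ∑ i, p i * a i zs := by
      have h1 := hposcomb zs hzsB
      have h2 : ∑ i, p i * a i zs = (∑ i, q i * a i zs) / σ := by
        rw [Finset.sum_div]
        exact Finset.sum_congr rfl fun i _ => by
          simp only [hpdef]; ring
      rw [h2]
      exact div_pos h1 hσpos
    linarith
  obtain ⟨z, hzmem⟩ := hBc.inter_iInter_nonempty Z hZc hfin
  refine ⟨z, hzmem.1, fun ω hω => ?_⟩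
  have h1 := Set.mem_iInter.mp hzmem.2 ⟨ω, hω⟩
  simp only [hZ, Set.mem_setOf_eq] at h1
  linarith


lemma ereal_cancel (c : ℝ) (x : EReal) :
    ((c : ℝ) : EReal) + (((-c : ℝ) : EReal) + x) = x := by
  induction x using EReal.rec with
  | bot => rw [EReal.add_bot, EReal.add_bot]
  | coe r => rw [← EReal.coe_add, ← EReal.coe_add]; norm_num
  | top => rw [EReal.coe_add_top, EReal.coe_add_top]

lemma const_add_iInf {α : Sort*} (c : ℝ) (f : α → EReal) :
    ((c : ℝ) : EReal) + ⨅ i, f i = ⨅ i, (((c : ℝ) : EReal) + f i) := by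
  apply le_antisymm
  · exact le_iInf fun i => add_le_add_right (iInf_le _ _) _
  · have h1 : (((-c : ℝ)) : EReal) + ⨅ i, (((c : ℝ) : EReal) + f i) ≤ ⨅ i, f i := by
      refine le_iInf fun i => ?_
      calc ((-c:ℝ):EReal) + ⨅ j, (((c:ℝ):EReal) + f j)
          ≤ ((-c:ℝ):EReal) + (((c:ℝ):EReal) + f i) := add_le_add_right (iInf_le _ _) _
        _ = f i := by simpa using ereal_cancel (-c) (f i)
    calc ⨅ i, (((c:ℝ):EReal) + f i)
        = ((c:ℝ):EReal) + (((-c:ℝ):EReal) + ⨅ i, (((c:ℝ):EReal) + f i)) :=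
          (ereal_cancel c _).symm
      _ ≤ ((c:ℝ):EReal) + ⨅ i, f i := add_le_add_right h1 _


end SPND

open SPND in
/-- Duality between the norm-penalized linear maximization over a nonempty
polyhedron `Ω = {ω : Gω ≤ h}` and the corresponding dual program, together with
the intermediate dual-norm representation. -/
theorem sup_polyhedron_norm_penalty_duality {n m : ℕ}
    (G : Matrix (Fin m) (Fin n) ℝ) (h : Fin m → ℝ) (e w : Fin n → ℝ)
    (lam : ℝ) (hlam : 0 ≤ lam)
    (hne : {ω : Fin n → ℝ | ∀ i, G.mulVec ω i ≤ h i}.Nonempty) :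
    (⨆ ω ∈ {ω : Fin n → ℝ | ∀ i, G.mulVec ω i ≤ h i},
        ((dotProduct e ω - lam * l2norm (ω - w) : ℝ) : EReal))
      = (⨅ η ∈ {η : Fin m → ℝ | (∀ i, 0 ≤ η i) ∧
            l2norm (e - G.transpose.mulVec η) ≤ lam},
          ((dotProduct (e - G.transpose.mulVec η) w
            + dotProduct η h : ℝ) : EReal))
    ∧
    (⨆ ω ∈ {ω : Fin n → ℝ | ∀ i, G.mulVec ω i ≤ h i},
        ((dotProduct e ω - lam * l2norm (ω - w) : ℝ) : EReal))
      = ⨅ z ∈ {z : Fin n → ℝ | l2norm z ≤ lam},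
          (((dotProduct z w : ℝ) : EReal)
            + ⨆ ω ∈ {ω : Fin n → ℝ | ∀ i, G.mulVec ω i ≤ h i},
                ((dotProduct (e - z) ω : ℝ) : EReal)) := by
  classical
  set Ω := {ω : Fin n → ℝ | ∀ i, G.mulVec ω i ≤ h i} with hΩ
  obtain ⟨ω₀, hω₀⟩ := hne
  have claim2 : (⨆ ω ∈ Ω, ((dotProduct e ω - lam * l2norm (ω - w) : ℝ) : EReal))
      = ⨅ z ∈ {z : Fin n → ℝ | l2norm z ≤ lam},
          (((dotProduct z w : ℝ) : EReal)
            + ⨆ ω ∈ Ω, ((dotProduct (e - z) ω : ℝ) : EReal)) := by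
    apply le_antisymm
    · refine iSup₂_le fun ω hω => le_iInf₂ fun z hz => ?_
      have hzmem : l2norm z ≤ lam := hz
      have hreal : dotProduct e ω - lam * l2norm (ω - w)
          ≤ dotProduct z w + dotProduct (e - z) ω := by
        have hc : dotProduct z (ω - w) ≤ lam * l2norm (ω - w) :=
          (cauchy z _).trans (mul_le_mul_of_nonneg_right hzmem (l2norm_nonneg _))
        have h1 : dotProduct (e - z) ω
            = dotProduct e ω - dotProduct z ω := sub_dotProduct _ _ _
        have h2 : dotProduct z (ω - w)
            = dotProduct z ω - dotProduct z w := dotProduct_sub _ _ _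
        linarith
      calc ((dotProduct e ω - lam * l2norm (ω - w) : ℝ) : EReal)
          ≤ ((dotProduct z w + dotProduct (e - z) ω : ℝ) : EReal) :=
            EReal.coe_le_coe_iff.mpr hreal
        _ = ((dotProduct z w : ℝ) : EReal)
            + ((dotProduct (e - z) ω : ℝ) : EReal) := EReal.coe_add _ _
        _ ≤ ((dotProduct z w : ℝ) : EReal)
            + ⨆ ω' ∈ Ω, ((dotProduct (e - z) ω' : ℝ) : EReal) :=
            add_le_add_right
              (le_iSup₂ (f := fun ω' (_ : ω' ∈ Ω) =>
                ((dotProduct (e - z) ω' : ℝ) : EReal)) ω hω) _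
    · set L := (⨆ ω ∈ Ω, ((dotProduct e ω - lam * l2norm (ω - w) : ℝ) : EReal)) with hL
      by_cases hTop : L = ⊤
      · rw [hTop]; exact le_top
      have hbot : L ≠ ⊥ := by
        have h1 : ((dotProduct e ω₀ - lam * l2norm (ω₀ - w) : ℝ) : EReal) ≤ L :=
          le_iSup₂ (f := fun ω (_ : ω ∈ Ω) =>
            ((dotProduct e ω - lam * l2norm (ω - w) : ℝ) : EReal)) ω₀ hω₀
        intro hb; rw [hb, le_bot_iff] at h1; exact EReal.coe_ne_bot _ h1
      obtain ⟨S, hS⟩ : ∃ S : ℝ, L = (S : EReal) := ⟨L.toReal, (EReal.coe_toReal hTop hbot).symm⟩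
      have hubS : ∀ ω ∈ Ω, dotProduct e ω - lam * l2norm (ω - w) ≤ S := fun ω hω =>
        EReal.coe_le_coe_iff.mp (hS ▸ le_iSup₂ (f := fun ω (_ : ω ∈ Ω) =>
          ((dotProduct e ω - lam * l2norm (ω - w) : ℝ) : EReal)) ω hω)
      obtain ⟨z, hzB, hzZ⟩ := exists_min_z G h e w hlam hubS
      have hsup : (⨆ ω ∈ Ω, ((dotProduct (e - z) ω : ℝ) : EReal))
          ≤ ((S - dotProduct z w : ℝ) : EReal) := by
        refine iSup₂_le fun ω hω => EReal.coe_le_coe_iff.mpr ?_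
        have h1 := hzZ ω hω
        have h2 : dotProduct (e - z) ω
            = dotProduct e ω - dotProduct z ω := sub_dotProduct _ _ _
        have h3 : dotProduct z (ω - w)
            = dotProduct z ω - dotProduct z w := dotProduct_sub _ _ _
        linarith
      calc (⨅ z' ∈ {z' : Fin n → ℝ | l2norm z' ≤ lam},
              (((dotProduct z' w : ℝ) : EReal)
                + ⨆ ω ∈ Ω, ((dotProduct (e - z') ω : ℝ) : EReal)))
          ≤ ((dotProduct z w : ℝ) : EReal)
            + ⨆ ω ∈ Ω, ((dotProduct (e - z) ω : ℝ) : EReal) :=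
            iInf₂_le (f := fun z' (_ : z' ∈ {z' : Fin n → ℝ | l2norm z' ≤ lam}) =>
              (((dotProduct z' w : ℝ) : EReal)
                + ⨆ ω ∈ Ω, ((dotProduct (e - z') ω : ℝ) : EReal))) z hzB
        _ ≤ ((dotProduct z w : ℝ) : EReal)
            + ((S - dotProduct z w : ℝ) : EReal) := add_le_add_right hsup _
        _ = ((S : ℝ) : EReal) := by rw [← EReal.coe_add]; norm_num
        _ = L := hS.symm
  refine ⟨?_, claim2⟩
  rw [claim2]
  have step1 : (⨅ z ∈ {z : Fin n → ℝ | l2norm z ≤ lam},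
        (((dotProduct z w : ℝ) : EReal)
          + ⨆ ω ∈ Ω, ((dotProduct (e - z) ω : ℝ) : EReal)))
      = ⨅ z ∈ {z : Fin n → ℝ | l2norm z ≤ lam},
          ⨅ η ∈ {η : Fin m → ℝ | (∀ i, 0 ≤ η i) ∧ G.transpose.mulVec η = e - z},
            ((dotProduct z w + dotProduct η h : ℝ) : EReal) := by
    refine iInf_congr fun z => iInf_congr fun hz => ?_
    rw [lp_duality G h ⟨ω₀, hω₀⟩ (e - z)]
    rw [const_add_iInf]
    refine iInf_congr fun η => ?_
    rw [const_add_iInf]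
    exact iInf_congr fun hη => (EReal.coe_add _ _).symm
  rw [step1]
  apply le_antisymm
  · refine le_iInf₂ fun η hη => ?_
    obtain ⟨hη0, hηl⟩ := hη
    have hzB : (e - G.transpose.mulVec η) ∈ {z : Fin n → ℝ | l2norm z ≤ lam} := hηl
    have hmem : η ∈ {η' : Fin m → ℝ | (∀ i, 0 ≤ η' i) ∧
        G.transpose.mulVec η' = e - (e - G.transpose.mulVec η)} :=
      ⟨hη0, (sub_sub_cancel _ _).symm⟩
    calc (⨅ z ∈ {z : Fin n → ℝ | l2norm z ≤ lam},
            ⨅ η' ∈ {η' : Fin m → ℝ | (∀ i, 0 ≤ η' i) ∧ G.transpose.mulVec η' = e - z},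
              ((dotProduct z w + dotProduct η' h : ℝ) : EReal))
        ≤ ⨅ η' ∈ {η' : Fin m → ℝ | (∀ i, 0 ≤ η' i) ∧
            G.transpose.mulVec η' = e - (e - G.transpose.mulVec η)},
            ((dotProduct (e - G.transpose.mulVec η) w
              + dotProduct η' h : ℝ) : EReal) :=
          iInf₂_le (e - G.transpose.mulVec η) hzB
      _ ≤ ((dotProduct (e - G.transpose.mulVec η) w
              + dotProduct η h : ℝ) : EReal) := iInf₂_le η hmem
  · refine le_iInf₂ fun z hz => le_iInf₂ fun η hη => ?_
    obtain ⟨hη0, hηz⟩ := hη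
    have hez : e - G.transpose.mulVec η = z := by rw [hηz]; exact sub_sub_cancel _ _
    have hmem : η ∈ {η' : Fin m → ℝ | (∀ i, 0 ≤ η' i) ∧
        l2norm (e - G.transpose.mulVec η') ≤ lam} := ⟨hη0, by rw [hez]; exact hz⟩
    calc (⨅ η' ∈ {η' : Fin m → ℝ | (∀ i, 0 ≤ η' i) ∧
            l2norm (e - G.transpose.mulVec η') ≤ lam},
            ((dotProduct (e - G.transpose.mulVec η') w
              + dotProduct η' h : ℝ) : EReal))
        ≤ ((dotProduct (e - G.transpose.mulVec η) w
            + dotProduct η h : ℝ) : EReal) := iInf₂_le η hmem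
      _ = ((dotProduct z w + dotProduct η h : ℝ) : EReal) := by rw [hez]
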